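/- For every κ > 0 and every real-valued smooth 1-periodic function q on ℝ, one has ∬_{[0,1)×[0,1)} q(x) G_κ(x,y)² q(y) dx dy = (2e^{−κ}/(1−e^{−κ})²) · |q̂(0)|²/(4κ²) + ((1−e^{−2κ})/(κ(1−e^{−κ})²)) Σ_{ξ∈2πℤ} |q̂(ξ)|²/(ξ²+4κ²), where G_κ(x,y) = (1/(2κ))(1−e^{−κ})^{-1} [ e^{−κ δ(x,y)} + e^{−κ+κ δ(x,y)} ] and δ(x,y) = dist(x−y, ℤ). -/

import Mathlib

open MeasureTheory Complex Real

/-- Fourier coefficients on the circle: `q̂(ξ) = ∫₀¹ e^{-iξx} q(x) dx` for `ξ ∈ 2πℤ`. -/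
noncomputable def FC (f : ℝ → ℝ) (ξ : ℝ) : ℂ :=
  ∫ x in (0:ℝ)..1, Complex.exp (-(Complex.I * ξ * x)) * f x

/-- Distance to the nearest integer. -/
noncomputable def distZ (x : ℝ) : ℝ := |x - round x|

/-- The kernel of the free resolvent `(-∂ₓ² + κ²)⁻¹` on `L²(ℝ/ℤ)`. -/
noncomputable def Gcirc (κ x y : ℝ) : ℝ :=
  (1 / (2 * κ)) * (1 - Real.exp (-κ))⁻¹ *
    (Real.exp (-κ * distZ (x - y)) + Real.exp (-κ + κ * distZ (x - y)))

lemma distZ_eq_norm (x : ℝ) : distZ x = ‖(x : AddCircle (1:ℝ))‖ := by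
  rw [AddCircle.norm_eq]; simp [distZ]

lemma distZ_continuous : Continuous distZ := by
  simp only [funext distZ_eq_norm]
  exact continuous_norm.comp continuous_quotient_mk'

lemma distZ_eq_self {t : ℝ} (h0 : 0 ≤ t) (h1 : t ≤ 1/2) : distZ t = t := by
  rcases eq_or_lt_of_le h1 with h | h
  · subst h; norm_num [distZ, round_eq]
  · have : round t = 0 := by
      rw [round_eq]
      have : ⌊t + 1/2⌋ = 0 := by
        apply Int.floor_eq_zero_iff.mpr
        constructor <;> simp <;> linarith
      simpa using this
    simp [distZ, this, _root_.abs_of_nonneg h0]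

lemma distZ_eq_one_sub {t : ℝ} (h0 : 1/2 ≤ t) (h1 : t ≤ 1) : distZ t = 1 - t := by
  have : round t = 1 := by
    rw [round_eq]
    have : ⌊t + 1/2⌋ = 1 := by
      apply Int.floor_eq_iff.mpr <;> norm_num <;> constructor <;> linarith
    simpa using this
  rw [distZ, this]
  push_cast
  rw [abs_of_nonpos (by linarith)]; ring

noncomputable def Hf (κ t : ℝ) : ℝ :=
  Real.exp (-(2*κ) * distZ t) + Real.exp (-(2*κ) + 2*κ * distZ t)

lemma Hf_continuous (κ : ℝ) : Continuous (Hf κ) := by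
  unfold Hf
  have := distZ_continuous
  fun_prop

lemma key_integral (κ : ℝ) (hκ : 0 < κ) (n : ℤ) :
    ∫ t in (0:ℝ)..1, Complex.exp (2*π*Complex.I*(-n)*t) * (Hf κ t : ℂ)
      = ((4*κ*(1 - Real.exp (-(2*κ))) / ((2*π*n)^2 + 4*κ^2) : ℝ) : ℂ) := by
  set w : ℂ := 2*π*Complex.I*(-n) with hw
  have hw' : w = ((-n : ℤ) : ℂ) * (2*π*Complex.I) := by rw [hw]; push_cast; ring
  have hexpw : Complex.exp w = 1 := by rw [hw']; exact Complex.exp_int_mul_two_pi_mul_I _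
  have hw2 : w^2 = -((2*π*(n:ℂ))^2) := by
    rw [hw']; push_cast; linear_combination (2*π*(n:ℂ))^2 * Complex.I_sq
  have hre1 : (w - 2*(κ:ℂ)).re = -(2*κ) := by simp [hw']
  have hre2 : (w + 2*(κ:ℂ)).re = 2*κ := by simp [hw']
  have hne1 : w - 2*(κ:ℂ) ≠ 0 := by
    intro h; rw [h] at hre1; simp at hre1; linarith
  have hne2 : w + 2*(κ:ℂ) ≠ 0 := by
    intro h; rw [h] at hre2; simp at hre2; linarith
  have hcong : ∀ t ∈ Set.uIcc (0:ℝ) 1,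
      Complex.exp (2*π*Complex.I*(-n)*t) * (Hf κ t : ℂ)
        = Complex.exp ((w - 2*(κ:ℂ))*t) + Complex.exp (-(2*(κ:ℂ)))
            * Complex.exp ((w + 2*(κ:ℂ))*t) := by
    intro t ht
    rw [Set.uIcc_of_le (by norm_num : (0:ℝ) ≤ 1)] at ht
    rcases le_or_gt t (1/2) with h | h
    · rw [Hf, distZ_eq_self ht.1 h]
      push_cast [Complex.ofReal_exp]
      rw [← hw]
      rw [mul_add, ← Complex.exp_add, ← Complex.exp_add, ← Complex.exp_add]
      congr 2 <;> ring
    · rw [Hf, distZ_eq_one_sub h.le ht.2]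
      push_cast [Complex.ofReal_exp]
      rw [← hw]
      rw [mul_add, ← Complex.exp_add, ← Complex.exp_add, ← Complex.exp_add]
      rw [add_comm (Complex.exp _)]
      congr 2 <;> ring
  rw [intervalIntegral.integral_congr hcong]
  rw [intervalIntegral.integral_add
      ((by fun_prop : Continuous fun x:ℝ => Complex.exp ((w - 2*(κ:ℂ))*x)).intervalIntegrable 0 1)
      ((by fun_prop : Continuous fun x:ℝ => Complex.exp (-(2*(κ:ℂ))) * Complex.exp ((w + 2*(κ:ℂ))*x)).intervalIntegrable 0 1),
    intervalIntegral.integral_const_mul, integral_exp_mul_complex hne1,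
    integral_exp_mul_complex hne2]
  have hE : Complex.exp (2*(κ:ℂ)) ≠ 0 := Complex.exp_ne_zero _
  have h1 : Complex.exp (w - 2*(κ:ℂ)) = (Complex.exp (2*(κ:ℂ)))⁻¹ := by
    rw [Complex.exp_sub, hexpw, ← Complex.exp_neg]; simp [Complex.exp_neg]
  have h2 : Complex.exp (w + 2*(κ:ℂ)) = Complex.exp (2*(κ:ℂ)) := by
    rw [Complex.exp_add, hexpw, one_mul]
  have h3 : Complex.exp (-(2*(κ:ℂ))) = (Complex.exp (2*(κ:ℂ)))⁻¹ := Complex.exp_neg _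
  have hcast : ((4*κ*(1 - Real.exp (-(2*κ))) / ((2*π*n)^2 + 4*κ^2) : ℝ) : ℂ)
      = 4*(κ:ℂ)*(1 - (Complex.exp (2*(κ:ℂ)))⁻¹) / (-(w^2) + 4*(κ:ℂ)^2) := by
    rw [hw2]
    push_cast [Complex.ofReal_exp]
    rw [Complex.exp_neg]
    ring_nf
  rw [hcast]
  simp only [Complex.ofReal_one, Complex.ofReal_zero, mul_one, mul_zero, Complex.exp_zero]
  rw [h1, h2, h3]
  have hden : -(w^2) + 4*(κ:ℂ)^2 ≠ 0 := by
    have : -(w^2) + 4*(κ:ℂ)^2 = -((w - 2*(κ:ℂ)) * (w + 2*(κ:ℂ))) := by ring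
    rw [this]
    exact neg_ne_zero.mpr (mul_ne_zero hne1 hne2)
  rw [eq_div_iff hden]
  field_simp
  ring

noncomputable def coefR (κ : ℝ) (n : ℤ) : ℝ :=
  4*κ*(1 - Real.exp (-(2*κ))) / ((2*π*n)^2 + 4*κ^2)

lemma coefR_nonneg (κ : ℝ) (hκ : 0 < κ) (n : ℤ) : 0 ≤ coefR κ n := by
  unfold coefR
  have h1 : Real.exp (-(2*κ)) ≤ 1 := Real.exp_le_one_iff.mpr (by linarith)
  apply div_nonneg (by nlinarith) (by positivity)

lemma coefR_summable (κ : ℝ) (hκ : 0 < κ) : Summable (coefR κ) := by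
  have hK : 0 ≤ 4*κ*(1 - Real.exp (-(2*κ))) := by
    have h1 : Real.exp (-(2*κ)) ≤ 1 := Real.exp_le_one_iff.mpr (by linarith)
    nlinarith
  apply Summable.of_norm_bounded_eventually
    (g := fun n : ℤ => (4*κ*(1 - Real.exp (-(2*κ))))/(4*π^2) * (1/(n:ℝ)^2))
    (((summable_one_div_int_pow (p := 2)).mpr (by norm_num)).mul_left _)
  filter_upwards [Filter.eventually_cofinite_ne 0] with n hn
  have hn2 : (1:ℝ) ≤ (n:ℝ)^2 := by
    have : (1:ℝ) ≤ |(n:ℝ)| := by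
      rw [← Int.cast_abs]
      exact_mod_cast Int.one_le_abs (by simpa using hn)
    rw [← _root_.sq_abs]; nlinarith [abs_nonneg (n:ℝ)]
  rw [Real.norm_eq_abs, _root_.abs_of_nonneg (coefR_nonneg κ hκ n)]
  unfold coefR
  rw [div_mul_div_comm, mul_one]
  apply div_le_div_of_nonneg_left hK (by nlinarith [Real.pi_pos])
  nlinarith [Real.pi_pos, sq_nonneg ((n:ℝ))]

noncomputable def fCM (κ : ℝ) : C(AddCircle (1:ℝ), ℂ) :=
  ⟨fun z => ((Real.exp (-(2*κ)*‖z‖) + Real.exp (-(2*κ)+2*κ*‖z‖) : ℝ) : ℂ), by fun_prop⟩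

lemma fCM_coe (κ : ℝ) (t : ℝ) : fCM κ ((t : ℝ) : AddCircle (1:ℝ)) = (Hf κ t : ℂ) := by
  simp [fCM, Hf, distZ_eq_norm]

lemma fourierCoeff_fCM (κ : ℝ) (hκ : 0 < κ) (n : ℤ) :
    fourierCoeff (⇑(fCM κ)) n = ((coefR κ n : ℝ) : ℂ) := by
  rw [fourierCoeff_eq_intervalIntegral _ n 0]
  have : ∀ x ∈ Set.uIcc (0:ℝ) (0 + 1),
      (fourier (-n) (x : AddCircle (1:ℝ))) • fCM κ ((x : ℝ) : AddCircle (1:ℝ))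
        = Complex.exp (2*π*Complex.I*(-n)*x) * (Hf κ x : ℂ) := by
    intro x _
    rw [fourier_coe_apply, fCM_coe, smul_eq_mul]
    norm_num
  rw [intervalIntegral.integral_congr this]
  rw [zero_add, key_integral κ hκ n]
  norm_num [coefR]

lemma hasSum_Hf (κ : ℝ) (hκ : 0 < κ) (t : ℝ) :
    HasSum (fun n : ℤ => (coefR κ n : ℂ) * Complex.exp (2*π*Complex.I*n*t)) ((Hf κ t : ℂ)) := by
  have hsummable : Summable (fourierCoeff (⇑(fCM κ))) := by
    rw [funext (fourierCoeff_fCM κ hκ)]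
    exact Complex.summable_ofReal.mpr (coefR_summable κ hκ)
  have := has_pointwise_sum_fourier_series_of_summable hsummable ((t : ℝ) : AddCircle (1:ℝ))
  rw [fCM_coe] at this
  convert this using 2 with n
  rw [fourierCoeff_fCM κ hκ, fourier_coe_apply, smul_eq_mul]
  norm_num

lemma FC_eq_Ico (q : ℝ → ℝ) (ξ : ℝ) :
    FC q ξ = ∫ y in Set.Ico (0:ℝ) 1, Complex.exp (-(Complex.I*ξ*y)) * (q y:ℂ) := by
  rw [FC, intervalIntegral.integral_of_le zero_le_one]
  exact (setIntegral_congr_set Ico_ae_eq_Ioc).symm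

lemma double_swap (κ : ℝ) (hκ : 0 < κ) (q : ℝ → ℝ) (hqc : Continuous q) :
    (∫ x in Set.Ico (0:ℝ) 1, q x * ∫ y in Set.Ico (0:ℝ) 1, Hf κ (x-y) * q y)
      = ∑' n : ℤ, coefR κ n * ‖FC q (2*π*n)‖^2 := by
  -- a bound for |q| on [0,1]
  obtain ⟨M, hM0, hM⟩ : ∃ M, 0 ≤ M ∧ ∀ y ∈ Set.Icc (0:ℝ) 1, |q y| ≤ M := by
    obtain ⟨z, _, hz⟩ := isCompact_Icc.exists_isMaxOn (α := ℝ) (Set.nonempty_Icc.mpr one_pos.le)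
      (continuous_abs.comp hqc).continuousOn
    exact ⟨|q z|, abs_nonneg _, fun y hy => isMaxOn_iff.mp hz y hy⟩
  have hqM : ∀ᵐ y ∂(volume.restrict (Set.Ico (0:ℝ) 1)), |q y| ≤ M := by
    filter_upwards [ae_restrict_mem measurableSet_Ico] with y hy
    exact hM y ⟨hy.1, hy.2.le⟩
  have hFCb : ∀ n : ℤ, ‖FC q (2*π*n)‖ ≤ M := by
    intro n
    have := intervalIntegral.norm_integral_le_of_norm_le_const (C := M) (a := (0:ℝ)) (b := 1)
      (f := fun y => Complex.exp (-(Complex.I*((2*π*(n:ℝ) : ℝ):ℂ)*y)) * (q y:ℂ)) ?_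
    · simpa [FC] using this
    · intro y hy
      rw [Set.uIoc_of_le (by norm_num : (0:ℝ) ≤ 1)] at hy
      have : ‖Complex.exp (-(Complex.I*((2*π*(n:ℝ) : ℝ):ℂ)*y))‖ = 1 := by
        rw [Complex.norm_exp]; norm_num
      rw [norm_mul, this, one_mul,
        Complex.norm_real, Real.norm_eq_abs]
      exact hM y ⟨hy.1.le, hy.2⟩
  have hvfin : (volume.restrict (Set.Ico (0:ℝ) 1)) Set.univ < ⊤ := by
    rw [Measure.restrict_apply_univ, Real.volume_Ico]
    exact ENNReal.ofReal_lt_top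
  -- inner hasSum
  have inner_hasSum : ∀ x : ℝ, HasSum
      (fun n : ℤ => (coefR κ n : ℂ) * Complex.exp (2*π*Complex.I*n*x) * FC q (2*π*n))
      (∫ y in Set.Ico (0:ℝ) 1, (Hf κ (x-y) : ℂ) * (q y : ℂ)) := by
    intro x
    have key := MeasureTheory.hasSum_integral_of_dominated_convergence
      (μ := volume.restrict (Set.Ico (0:ℝ) 1))
      (F := fun (n : ℤ) (y : ℝ) =>
        (coefR κ n : ℂ) * Complex.exp (2*π*Complex.I*n*((x-y : ℝ):ℂ)) * (q y:ℂ))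
      (f := fun y => (Hf κ (x-y) : ℂ) * (q y : ℂ))
      (fun n _ => coefR κ n * M)
      (fun n => Continuous.aestronglyMeasurable (by fun_prop))
      (fun n => by
        filter_upwards [hqM] with y hy
        have h1 : ‖Complex.exp (2*π*Complex.I*n*((x-y:ℝ):ℂ))‖ = 1 := by
          rw [Complex.norm_exp]; norm_num
        rw [norm_mul, norm_mul,
          h1, mul_one, Complex.norm_real, Complex.norm_real, Real.norm_eq_abs, Real.norm_eq_abs,
          _root_.abs_of_nonneg (coefR_nonneg κ hκ n)]
        exact mul_le_mul_of_nonneg_left hy (coefR_nonneg κ hκ n))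
      (by
        filter_upwards with y
        exact (coefR_summable κ hκ).mul_right M)
      (integrableOn_const (by rw [Real.volume_Ico]; exact ENNReal.ofReal_ne_top))
      (by
        filter_upwards with y
        exact (hasSum_Hf κ hκ (x - y)).mul_right (q y : ℂ))
    have heq : ∀ n : ℤ,
        (∫ y in Set.Ico (0:ℝ) 1,
          (coefR κ n : ℂ) * Complex.exp (2*π*Complex.I*n*((x-y : ℝ):ℂ)) * (q y:ℂ))
        = (coefR κ n : ℂ) * Complex.exp (2*π*Complex.I*n*x) * FC q (2*π*n) := by
      intro n
      have hsplit : ∀ y : ℝ,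
          (coefR κ n : ℂ) * Complex.exp (2*π*Complex.I*n*((x-y : ℝ):ℂ)) * (q y:ℂ)
            = ((coefR κ n : ℂ) * Complex.exp (2*π*Complex.I*n*x)) *
              (Complex.exp (-(Complex.I*((2*π*(n:ℝ) : ℝ):ℂ)*y)) * (q y:ℂ)) := by
        intro y
        have : Complex.exp (2*π*Complex.I*n*((x-y : ℝ):ℂ))
            = Complex.exp (2*π*Complex.I*n*x) * Complex.exp (-(Complex.I*((2*π*(n:ℝ) : ℝ):ℂ)*y)) := by
          rw [← Complex.exp_add]; congr 1; push_cast; ring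
        rw [this]; ring
      simp_rw [hsplit]
      rw [MeasureTheory.integral_const_mul, FC_eq_Ico]
    rw [funext heq] at key
    exact key
  -- outer hasSum
  have outer_hasSum := MeasureTheory.hasSum_integral_of_dominated_convergence
    (μ := volume.restrict (Set.Ico (0:ℝ) 1))
    (F := fun (n : ℤ) (x : ℝ) =>
      (q x:ℂ) * ((coefR κ n : ℂ) * Complex.exp (2*π*Complex.I*n*x) * FC q (2*π*n)))
    (f := fun x => (q x:ℂ) * ∫ y in Set.Ico (0:ℝ) 1, (Hf κ (x-y) : ℂ) * (q y : ℂ))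
    (fun n _ => M * (coefR κ n * M))
    (fun n => Continuous.aestronglyMeasurable (by fun_prop))
    (fun n => by
      filter_upwards [hqM] with x hx
      have h1 : ‖Complex.exp (2*π*Complex.I*n*(x:ℂ))‖ = 1 := by
        rw [Complex.norm_exp]; norm_num
      rw [norm_mul, norm_mul, norm_mul,
        h1, mul_one, Complex.norm_real,
        Complex.norm_real, Real.norm_eq_abs, Real.norm_eq_abs, _root_.abs_of_nonneg (coefR_nonneg κ hκ n)]
      exact mul_le_mul hx (mul_le_mul_of_nonneg_left (hFCb n) (coefR_nonneg κ hκ n))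
        (mul_nonneg (coefR_nonneg κ hκ n) (norm_nonneg _)) hM0)
    (by
      filter_upwards with x
      exact ((coefR_summable κ hκ).mul_right M).mul_left M)
    (integrableOn_const (by rw [Real.volume_Ico]; exact ENNReal.ofReal_ne_top))
    (by
      filter_upwards with x
      exact (inner_hasSum x).mul_left (q x : ℂ))
  -- identify the terms of the outer sum
  have hconj : ∀ n : ℤ,
      (∫ x in Set.Ico (0:ℝ) 1, Complex.exp (2*π*Complex.I*n*(x:ℂ)) * (q x:ℂ))
        = (starRingEnd ℂ) (FC q (2*π*n)) := by
    intro n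
    rw [FC_eq_Ico, ← integral_conj]
    apply MeasureTheory.integral_congr_ae
    filter_upwards with x
    rw [map_mul, Complex.conj_ofReal, ← Complex.exp_conj]
    congr 1
    simp only [map_neg, map_mul, Complex.conj_I, Complex.conj_ofReal]
    push_cast
    ring
  have hterm : ∀ n : ℤ,
      (∫ x in Set.Ico (0:ℝ) 1,
        (q x:ℂ) * ((coefR κ n : ℂ) * Complex.exp (2*π*Complex.I*n*(x:ℂ)) * FC q (2*π*n)))
      = ((coefR κ n * ‖FC q (2*π*n)‖^2 : ℝ) : ℂ) := by
    intro n
    have hsplit : ∀ x : ℝ,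
        (q x:ℂ) * ((coefR κ n : ℂ) * Complex.exp (2*π*Complex.I*n*(x:ℂ)) * FC q (2*π*n))
          = ((coefR κ n : ℂ) * FC q (2*π*n)) * (Complex.exp (2*π*Complex.I*n*(x:ℂ)) * (q x:ℂ)) :=
      fun x => by ring
    simp_rw [hsplit]
    rw [MeasureTheory.integral_const_mul, hconj n]
    rw [mul_assoc, Complex.mul_conj, ← Complex.sq_norm]
    push_cast
    ring
  rw [funext hterm] at outer_hasSum
  -- pass to the real statement
  have hreal : ∀ x : ℝ,
      (q x:ℂ) * ∫ y in Set.Ico (0:ℝ) 1, (Hf κ (x-y) : ℂ) * (q y : ℂ)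
        = ((q x * ∫ y in Set.Ico (0:ℝ) 1, Hf κ (x-y) * q y : ℝ) : ℂ) := by
    intro x
    have h1 : (∫ y in Set.Ico (0:ℝ) 1, (Hf κ (x-y) : ℂ) * (q y : ℂ))
        = ((∫ y in Set.Ico (0:ℝ) 1, Hf κ (x-y) * q y : ℝ) : ℂ) := by
      calc (∫ y in Set.Ico (0:ℝ) 1, (Hf κ (x-y) : ℂ) * (q y : ℂ))
          = ∫ y in Set.Ico (0:ℝ) 1, ((Hf κ (x-y) * q y : ℝ) : ℂ) := by
            apply MeasureTheory.integral_congr_ae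
            filter_upwards with y
            push_cast; ring
        _ = ((∫ y in Set.Ico (0:ℝ) 1, Hf κ (x-y) * q y : ℝ) : ℂ) := integral_ofReal
    rw [h1, ← Complex.ofReal_mul]
  simp_rw [hreal] at outer_hasSum
  have h2 : (∫ a in Set.Ico (0:ℝ) 1,
        ((q a * ∫ y in Set.Ico (0:ℝ) 1, Hf κ (a-y) * q y : ℝ) : ℂ))
      = ((∫ a in Set.Ico (0:ℝ) 1, (q a * ∫ y in Set.Ico (0:ℝ) 1, Hf κ (a-y) * q y) : ℝ) : ℂ) :=
    integral_ofReal
  rw [h2] at outer_hasSum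
  exact (Complex.hasSum_ofReal.mp outer_hasSum).tsum_eq.symm

lemma Hf_nonneg (κ t : ℝ) : 0 ≤ Hf κ t := by unfold Hf; positivity

lemma Hf_le_two (κ : ℝ) (hκ : 0 < κ) (t : ℝ) : Hf κ t ≤ 2 := by
  have h1 : 0 ≤ distZ t := abs_nonneg _
  have h2 : distZ t ≤ 1/2 := abs_sub_round t
  have e1 : Real.exp (-(2*κ) * distZ t) ≤ 1 := Real.exp_le_one_iff.mpr (by nlinarith)
  have e2 : Real.exp (-(2*κ) + 2*κ * distZ t) ≤ 1 := Real.exp_le_one_iff.mpr (by nlinarith)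
  unfold Hf; linarith

theorem hilbert_schmidt_norm_circle (κ : ℝ) (hκ : 0 < κ) (q : ℝ → ℝ)
    (hq : ContDiff ℝ (⊤ : ℕ∞) q) (hper : ∀ x, q (x + 1) = q x) :
    ∫ x in Set.Ico (0:ℝ) 1, ∫ y in Set.Ico (0:ℝ) 1, q x * Gcirc κ x y ^ 2 * q y =
      (2 * Real.exp (-κ) / (1 - Real.exp (-κ)) ^ 2) *
          (‖FC q 0‖ ^ 2 / (4 * κ ^ 2)) +
        ((1 - Real.exp (-2 * κ)) / (κ * (1 - Real.exp (-κ)) ^ 2)) *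
          ∑' n : ℤ, ‖FC q (2 * Real.pi * n)‖ ^ 2 /
            ((2 * Real.pi * n) ^ 2 + 4 * κ ^ 2) := by
  have hqc : Continuous q := hq.continuous
  have hE1 : Real.exp (-κ) < 1 := Real.exp_lt_one_iff.mpr (by linarith)
  have hene : 1 - Real.exp (-κ) ≠ 0 := ne_of_gt (by linarith)
  obtain ⟨M, hM0, hM⟩ : ∃ M, 0 ≤ M ∧ ∀ y ∈ Set.Icc (0:ℝ) 1, |q y| ≤ M := by
    obtain ⟨z, _, hz⟩ := isCompact_Icc.exists_isMaxOn (α := ℝ) (Set.nonempty_Icc.mpr one_pos.le)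
      (continuous_abs.comp hqc).continuousOn
    exact ⟨|q z|, abs_nonneg _, fun y hy => isMaxOn_iff.mp hz y hy⟩
  set C : ℝ := (1/(2*κ) * (1 - Real.exp (-κ))⁻¹)^2 with hC
  set Iq : ℝ := ∫ x in Set.Ico (0:ℝ) 1, q x with hIq
  set g : ℝ → ℝ := fun x => ∫ y in Set.Ico (0:ℝ) 1, Hf κ (x-y) * q y with hg
  have hHcont : Continuous (Hf κ) := Hf_continuous κ
  have hexp2 : ∀ u : ℝ, Real.exp u ^ 2 = Real.exp (2*u) := by
    intro u
    rw [sq, ← Real.exp_add]; congr 1; ring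
  -- pointwise expansion of the square
  have hpt : ∀ x y : ℝ, q x * Gcirc κ x y ^ 2 * q y
      = (2*Real.exp (-κ) * C * q x) * q y + (C * q x) * (Hf κ (x-y) * q y) := by
    intro x y
    have hsq : (Real.exp (-κ * distZ (x-y)) + Real.exp (-κ + κ * distZ (x-y)))^2
        = Hf κ (x-y) + 2*Real.exp (-κ) := by
      rw [add_sq, hexp2, hexp2, mul_assoc, ← Real.exp_add, Hf]
      ring_nf
    rw [Gcirc, mul_pow, hsq, hC]
    ring
  -- inner integral
  have hinner : ∀ x : ℝ, (∫ y in Set.Ico (0:ℝ) 1, q x * Gcirc κ x y ^ 2 * q y)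
      = (2*Real.exp (-κ) * C * Iq) * q x + (C * q x) * g x := by
    intro x
    simp_rw [hpt x]
    rw [MeasureTheory.integral_add
      ((((by fun_prop : Continuous fun y : ℝ => (2*Real.exp (-κ) * C * q x) * q y)).integrableOn_Icc
          (μ := volume)).mono_set Set.Ico_subset_Icc_self)
      ((((by fun_prop : Continuous fun y : ℝ => (C * q x) * (Hf κ (x-y) * q y))).integrableOn_Icc
          (μ := volume)).mono_set Set.Ico_subset_Icc_self),
      MeasureTheory.integral_const_mul, MeasureTheory.integral_const_mul, ← hIq]
    rw [hg]
    ring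
  -- measurability and integrability of g
  have hgm : StronglyMeasurable g := by
    apply MeasureTheory.StronglyMeasurable.integral_prod_right'
      (f := fun p : ℝ × ℝ => Hf κ (p.1 - p.2) * q p.2)
    exact Continuous.stronglyMeasurable (by fun_prop)
  have hgb : ∀ x, |g x| ≤ 2*M := by
    intro x
    rw [hg]
    have hb := norm_setIntegral_le_of_norm_le_const (C := 2*M)
      (s := Set.Ico (0:ℝ) 1) (μ := volume)
      (f := fun y => Hf κ (x-y) * q y)
      (by rw [Real.volume_Ico]; exact ENNReal.ofReal_lt_top)
      (fun y hy => by
        rw [Real.norm_eq_abs, abs_mul, _root_.abs_of_nonneg (Hf_nonneg κ _)]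
        exact mul_le_mul (Hf_le_two κ hκ _) (hM y ⟨hy.1, hy.2.le⟩) (abs_nonneg _) (by norm_num))
    rw [Real.norm_eq_abs] at hb
    apply hb.trans
    rw [Real.volume_real_Ico]
    norm_num
  have hgint : IntegrableOn (fun x => (C * q x) * g x) (Set.Ico (0:ℝ) 1) := by
    apply Integrable.mono' (g := fun _ => |C| * M * (2*M))
      (integrableOn_const (by rw [Real.volume_Ico]; exact ENNReal.ofReal_ne_top))
    · exact ((continuous_const.mul hqc).aestronglyMeasurable).mul hgm.aestronglyMeasurable
    · filter_upwards [ae_restrict_mem measurableSet_Ico] with x hx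
      rw [Real.norm_eq_abs, abs_mul, abs_mul]
      apply mul_le_mul (mul_le_mul le_rfl (hM x ⟨hx.1, hx.2.le⟩) (abs_nonneg _) (abs_nonneg _))
        (hgb x) (abs_nonneg _)
      positivity
  -- outer integral
  have houter : (∫ x in Set.Ico (0:ℝ) 1, ∫ y in Set.Ico (0:ℝ) 1, q x * Gcirc κ x y ^ 2 * q y)
      = (2*Real.exp (-κ) * C * Iq) * Iq
        + C * ∫ x in Set.Ico (0:ℝ) 1, q x * g x := by
    simp_rw [hinner]
    rw [MeasureTheory.integral_add
      ((((by fun_prop : Continuous fun x : ℝ => (2*Real.exp (-κ) * C * Iq) * q x)).integrableOn_Icc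
          (μ := volume)).mono_set Set.Ico_subset_Icc_self) hgint,
      MeasureTheory.integral_const_mul, ← hIq]
    have : ∀ x : ℝ, (C * q x) * g x = C * (q x * g x) := fun x => by ring
    simp_rw [this]
    rw [MeasureTheory.integral_const_mul]
  -- apply the swap lemma
  have hswap := double_swap κ hκ q hqc
  have hDI : (∫ x in Set.Ico (0:ℝ) 1, q x * g x)
      = (4*κ*(1 - Real.exp (-(2*κ)))) *
          ∑' n : ℤ, ‖FC q (2*π*n)‖^2 / ((2*π*n)^2 + 4*κ^2) := by
    rw [hg] at *
    rw [hswap]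
    rw [← tsum_mul_left]
    apply tsum_congr
    intro n
    rw [coefR]
    ring
  -- FC q 0
  have hFC0 : ‖FC q 0‖^2 = Iq^2 := by
    have h1 : FC q 0 = ((∫ x in (0:ℝ)..1, q x : ℝ) : ℂ) := by
      rw [FC]
      simp only [Complex.ofReal_zero, mul_zero, zero_mul, neg_zero, Complex.exp_zero, one_mul]
      exact intervalIntegral.integral_ofReal
    have h2 : (∫ x in (0:ℝ)..1, q x : ℝ) = Iq := by
      rw [hIq, intervalIntegral.integral_of_le zero_le_one]
      exact (setIntegral_congr_set Ico_ae_eq_Ioc).symm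
    rw [h1, h2, Complex.norm_real, Real.norm_eq_abs, _root_.sq_abs]
  rw [houter, hDI, hFC0]
  have hkne : κ ≠ 0 := hκ.ne'
  rw [show Real.exp (-2 * κ) = Real.exp (-(2*κ)) by ring_nf]
  rw [hC]
  field_simp
  ring
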